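/- If a coarse structure E on X is monogenic with two generators F and G, then there exists a constant K > 0 such that (1/K)·d_G(x,y) ≤ d_F(x,y) ≤ K·d_G(x,y) for all x, y ∈ X, where d_F, d_G are the respective graph path metrics. -/

import Mathlib

open scoped ENNReal NNReal

structure CoarseStructure (X : Type*) where
  sets : Set (Set (X × X))
  diag_mem : {p : X × X | p.1 = p.2} ∈ sets
  subset_mem : ∀ E F : Set (X × X), E ∈ sets → F ⊆ E → F ∈ sets
  union_mem : ∀ E F : Set (X × X), E ∈ sets → F ∈ sets → E ∪ F ∈ sets
  inv_mem : ∀ E : Set (X × X), E ∈ sets → {p : X × X | (p.2, p.1) ∈ E} ∈ sets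
  comp_mem : ∀ E F : Set (X × X), E ∈ sets → F ∈ sets →
    {p : X × X | ∃ y, (p.1, y) ∈ E ∧ (y, p.2) ∈ F} ∈ sets

def generatedCoarse {X : Type*} (S : Set (Set (X × X))) : Set (Set (X × X)) :=
  {E | ∀ C : CoarseStructure X, S ⊆ C.sets → E ∈ C.sets}

def boundedCoarse {X : Type*} (d : X → X → ℝ≥0∞) : Set (Set (X × X)) :=
  {E | ∃ M : ℝ≥0, ∀ p ∈ E, d p.1 p.2 ≤ (M : ℝ≥0∞)}

/-- The path (extended) metric of the graph on `X` with edge relation `R`: the infimum of the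
lengths of `R`-paths from `x` to `y` (`∞` if there is none). -/
noncomputable def pathMetric {X : Type*} (R : X → X → Prop) (x y : X) : ℝ≥0∞ :=
  sInf {n : ℝ≥0∞ | ∃ m : ℕ, n = (m : ℝ≥0∞) ∧
    ∃ c : ℕ → X, c 0 = x ∧ c m = y ∧ ∀ i < m, R (c i) (c (i + 1))}


section PathMetricLemmas

variable {X : Type*} {R S : X → X → Prop}

lemma pm_le {x y : X} {m : ℕ}
    (h : ∃ c : ℕ → X, c 0 = x ∧ c m = y ∧ ∀ i < m, R (c i) (c (i + 1))) :
    pathMetric R x y ≤ m :=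
  sInf_le ⟨m, rfl, h⟩

lemma pm_self (x : X) : pathMetric R x x = 0 := by
  refine le_antisymm ?_ zero_le
  simpa using pm_le (R := R) (m := 0) ⟨fun _ => x, rfl, rfl, by omega⟩

lemma pm_le_one {x y : X} (h : R x y) : pathMetric R x y ≤ 1 := by
  simpa using pm_le (R := R) (m := 1)
    ⟨fun i => if i = 0 then x else y, by simp, by simp, by
      intro i hi; interval_cases i; simpa using h⟩

lemma pm_cases (x y : X) :
    pathMetric R x y = ⊤ ∨ ∃ m : ℕ, pathMetric R x y = m ∧
      ∃ c : ℕ → X, c 0 = x ∧ c m = y ∧ ∀ i < m, R (c i) (c (i + 1)) := by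
  classical
  by_cases h : ∃ m : ℕ, ∃ c : ℕ → X, c 0 = x ∧ c m = y ∧ ∀ i < m, R (c i) (c (i + 1))
  · right
    refine ⟨Nat.find h, le_antisymm (pm_le (Nat.find_spec h)) ?_, Nat.find_spec h⟩
    refine le_sInf ?_
    rintro n ⟨k, rfl, hc⟩
    exact_mod_cast Nat.find_min' h hc
  · left
    rw [pathMetric, sInf_eq_top]
    rintro n ⟨k, rfl, hc⟩
    exact absurd ⟨k, hc⟩ h

lemma pm_triangle (x y z : X) :
    pathMetric R x z ≤ pathMetric R x y + pathMetric R y z := by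
  rcases pm_cases (R := R) x y with h1 | ⟨m, h1, c1, hc10, hc1m, hc1s⟩
  · simp [h1]
  rcases pm_cases (R := R) y z with h2 | ⟨k, h2, c2, hc20, hc2k, hc2s⟩
  · simp [h2]
  rw [h1, h2]
  have : pathMetric R x z ≤ ((m + k : ℕ) : ℝ≥0∞) := by
    refine pm_le ⟨fun i => if i ≤ m then c1 i else c2 (i - m), by simpa using hc10, ?_, ?_⟩
    · by_cases hk : k = 0
      · subst hk
        simp only [Nat.add_zero, le_refl, if_true]
        rw [hc1m, ← hc20, hc2k]
      · have : ¬ (m + k ≤ m) := by omega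
        simp only [this, if_false]
        simpa using hc2k
    · intro i hi
      dsimp only
      by_cases him : i < m
      · have h1' : i ≤ m := by omega
        have h2' : i + 1 ≤ m := by omega
        simp only [h1', h2', if_true]
        exact hc1s i him
      · have h1' : ¬ (i + 1 ≤ m) := by omega
        have key : ∀ j, m ≤ j → (if j ≤ m then c1 j else c2 (j - m)) = c2 (j - m) := by
          intro j hj
          by_cases hjm : j ≤ m
          · have : j = m := le_antisymm hjm hj
            subst this
            simp [hc1m, hc20]
          · simp [hjm]
        rw [key i (by omega), key (i + 1) (by omega)]
        have : i + 1 - m = i - m + 1 := by omega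
        rw [this]
        exact hc2s (i - m) (by omega)
  simpa [Nat.cast_add] using this

lemma pm_symm (hR : ∀ a b, R a b → R b a) (x y : X) :
    pathMetric R y x ≤ pathMetric R x y := by
  rcases pm_cases (R := R) x y with h | ⟨m, h, c, hc0, hcm, hcs⟩
  · simp [h]
  rw [h]
  refine pm_le ⟨fun i => c (m - i), by simpa using hcm, by simpa using hc0, ?_⟩
  intro i hi
  dsimp only
  have h1 : m - i - 1 + 1 = m - i := by omega
  have h2 : m - (i + 1) = m - i - 1 := by omega
  rw [h2]
  refine hR _ _ ?_
  rw [← h1]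
  exact hcs (m - i - 1) (by omega)

lemma pm_chain {M : ℝ≥0∞} (c : ℕ → X) (m : ℕ)
    (h : ∀ i < m, pathMetric S (c i) (c (i + 1)) ≤ M) :
    pathMetric S (c 0) (c m) ≤ m * M := by
  induction m with
  | zero => simp [pm_self]
  | succ n ih =>
      calc pathMetric S (c 0) (c (n + 1))
          ≤ pathMetric S (c 0) (c n) + pathMetric S (c n) (c (n + 1)) := pm_triangle _ _ _
        _ ≤ n * M + M := add_le_add (ih fun i hi => h i (by omega)) (h n (by omega))
        _ = (n + 1 : ℕ) * M := by push_cast; ring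

lemma pm_key {M : ℝ≥0∞} (hM0 : M ≠ 0)
    (hM : ∀ a b, R a b → pathMetric S a b ≤ M) (x y : X) :
    pathMetric S x y ≤ M * pathMetric R x y := by
  rcases pm_cases (R := R) x y with h | ⟨m, h, c, hc0, hcm, hcs⟩
  · simp [h, ENNReal.mul_top hM0]
  rw [h]
  rw [← hc0, ← hcm, mul_comm]
  exact pm_chain c m fun i hi => hM _ _ (hcs i hi)

end PathMetricLemmas

def boundedCoarseStructure {X : Type*} (R : X → X → Prop) (hR : ∀ a b, R a b → R b a) :
    CoarseStructure X where
  sets := boundedCoarse (pathMetric R)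
  diag_mem := ⟨0, fun p hp => by
    simp only [Set.mem_setOf_eq] at hp
    simp [hp, pm_self]⟩
  subset_mem := fun E F ⟨M, hM⟩ hFE => ⟨M, fun p hp => hM p (hFE hp)⟩
  union_mem := fun E F ⟨M, hM⟩ ⟨N, hN⟩ =>
    ⟨max M N, fun p hp => hp.elim
      (fun h => (hM p h).trans (by exact_mod_cast le_max_left M N))
      (fun h => (hN p h).trans (by exact_mod_cast le_max_right M N))⟩
  inv_mem := fun E ⟨M, hM⟩ =>
    ⟨M, fun p hp => (pm_symm hR p.2 p.1).trans (hM (p.2, p.1) hp)⟩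
  comp_mem := fun E F ⟨M, hM⟩ ⟨N, hN⟩ =>
    ⟨M + N, fun p hp => by
      obtain ⟨y, h1, h2⟩ := hp
      calc pathMetric R p.1 p.2 ≤ pathMetric R p.1 y + pathMetric R y p.2 := pm_triangle _ _ _
        _ ≤ (M : ℝ≥0∞) + N := add_le_add (hM (p.1, y) h1) (hN (y, p.2) h2)
        _ = ((M + N : ℝ≥0) : ℝ≥0∞) := by push_cast; ring⟩

/-- For a generator `E` of the coarse structure generated by `G`, the symmetrization of `E`
has path-metric-bounded entries. -/
lemma exists_bound {X : Type*} (C : CoarseStructure X) (E G : Set (X × X))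
    (hE : C.sets = generatedCoarse {E}) (hG : C.sets = generatedCoarse {G}) :
    ∃ M : ℝ≥0, ∀ a b : X, ((a, b) ∈ E ∨ (b, a) ∈ E) →
      pathMetric (fun a b => (a, b) ∈ G ∨ (b, a) ∈ G) a b ≤ M := by
  set RG : X → X → Prop := fun a b => (a, b) ∈ G ∨ (b, a) ∈ G with hRG
  have hsymm : ∀ a b, RG a b → RG b a := fun a b h => h.symm
  -- E is in C.sets
  have hEC : E ∈ C.sets := by
    rw [hE]; exact fun D hD => hD (Set.mem_singleton E)
  -- symmetrization of E is in C.sets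
  have hE'C : E ∪ {p : X × X | (p.2, p.1) ∈ E} ∈ C.sets :=
    C.union_mem _ _ hEC (C.inv_mem _ hEC)
  -- the bounded coarse structure of pathMetric RG contains G
  have hGmem : G ∈ (boundedCoarseStructure RG hsymm).sets :=
    ⟨1, fun p hp => by simpa using pm_le_one (R := RG) (Or.inl hp)⟩
  have hE'bd : E ∪ {p : X × X | (p.2, p.1) ∈ E} ∈ (boundedCoarseStructure RG hsymm).sets := by
    rw [hG] at hE'C
    exact hE'C (boundedCoarseStructure RG hsymm) (Set.singleton_subset_iff.2 hGmem)
  obtain ⟨M, hM⟩ := hE'bd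
  refine ⟨M, fun a b hab => ?_⟩
  exact hM (a, b) (hab.elim Or.inl fun h => Or.inr h)

/-- If a monogenic coarse structure has two generators `F` and `G`, then the corresponding graph
path metrics are equivalent up to a multiplicative constant `K`. -/
theorem generators_path_metrics_equivalent {X : Type*} (C : CoarseStructure X)
    (F G : Set (X × X))
    (hF : C.sets = generatedCoarse {F}) (hG : C.sets = generatedCoarse {G}) :
    ∃ K : ℝ≥0, 0 < K ∧ ∀ x y : X,
      (K : ℝ≥0∞)⁻¹ * pathMetric (fun a b => (a, b) ∈ G ∨ (b, a) ∈ G) x y ≤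
          pathMetric (fun a b => (a, b) ∈ F ∨ (b, a) ∈ F) x y ∧
        pathMetric (fun a b => (a, b) ∈ F ∨ (b, a) ∈ F) x y ≤
          (K : ℝ≥0∞) * pathMetric (fun a b => (a, b) ∈ G ∨ (b, a) ∈ G) x y := by
  set RF : X → X → Prop := fun a b => (a, b) ∈ F ∨ (b, a) ∈ F with hRF
  set RG : X → X → Prop := fun a b => (a, b) ∈ G ∨ (b, a) ∈ G with hRG
  obtain ⟨MF, hMF⟩ := exists_bound C F G hF hG
  obtain ⟨MG, hMG⟩ := exists_bound C G F hG hF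
  refine ⟨1 + MF + MG, by positivity, fun x y => ?_⟩
  set K : ℝ≥0 := 1 + MF + MG with hK
  have hK0 : (K : ℝ≥0∞) ≠ 0 := by
    simp only [ne_eq, ENNReal.coe_eq_zero]
    positivity
  have hKtop : (K : ℝ≥0∞) ≠ ⊤ := ENNReal.coe_ne_top
  have hF' : ∀ a b, RF a b → pathMetric RG a b ≤ (K : ℝ≥0∞) := fun a b h =>
    (hMF a b h).trans (by exact_mod_cast le_add_of_le_of_nonneg (le_add_self) (zero_le : 0 ≤ MG))
  have hG' : ∀ a b, RG a b → pathMetric RF a b ≤ (K : ℝ≥0∞) := fun a b h =>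
    (hMG a b h).trans (by exact_mod_cast le_add_self)
  have h2 : pathMetric RG x y ≤ (K : ℝ≥0∞) * pathMetric RF x y := pm_key hK0 hF' x y
  have h1 : pathMetric RF x y ≤ (K : ℝ≥0∞) * pathMetric RG x y := pm_key hK0 hG' x y
  refine ⟨?_, h1⟩
  calc (K : ℝ≥0∞)⁻¹ * pathMetric RG x y
      ≤ (K : ℝ≥0∞)⁻¹ * ((K : ℝ≥0∞) * pathMetric RF x y) := mul_le_mul_right h2 _
    _ = ((K : ℝ≥0∞)⁻¹ * K) * pathMetric RF x y := by rw [mul_assoc]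
    _ = pathMetric RF x y := by rw [ENNReal.inv_mul_cancel hK0 hKtop, one_mul]
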